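/- Let q be a prime power and let k ≥ 1, d be natural numbers. Then the number of quadruples (u,v,x,y) with u, x ∈ F_q^k having pairwise-distinct entries, v, y ∈ F_q^k having all entries nonzero, and Z(u,v) = Z(x,y), is at most N_g²/q^{d+1} + (q(d+1))^{2k} (as an inequality of real numbers), where N_g := (∏_{i=0}^{k-1}(q-i)) · (q-1)^k. Equivalently, Σ_{z ∈ F_q^{d+1}} |Z^{-1}(z)^good|² ≤ N_g²/q^{d+1} + (q(d+1))^{2k}. -/

import Mathlib

open Finset Polynomial

namespace Stmt16Aux

private lemma addChar_map_sum {A M : Type*} [AddCommMonoid A] [CommMonoid M] (ψ : AddChar A M)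
    {ι : Type*} (s : Finset ι) (f : ι → A) : ψ (∑ i ∈ s, f i) = ∏ i ∈ s, ψ (f i) := by
  induction s using Finset.cons_induction with
  | empty => simp
  | cons a s ha ih => rw [Finset.sum_cons, Finset.prod_cons, AddChar.map_add_eq_mul, ih]

variable {F : Type*} [Field F] [Fintype F] [DecidableEq F]

private lemma norm_psi (ψ : AddChar F ℂ) (a : F) : ‖ψ a‖ = 1 := by
  have hR : 0 < ringChar F := Nat.pos_of_ne_zero (CharP.ringChar_ne_zero_of_finite F)
  have H := Complex.norm_eq_one_of_mem_rootsOfUnity <| ψ.val_mem_rootsOfUnity a hR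
  simpa using H

private lemma roots_card {d : ℕ} {l : Fin (d+1) → F} (hl : l ≠ 0) :
    (univ.filter fun a : F => ∑ j : Fin (d+1), l j * a ^ (j:ℕ) = 0).card ≤ d := by
  set p : F[X] := ∑ j : Fin (d+1), C (l j) * X ^ (j:ℕ) with hp
  have heval : ∀ a : F, p.eval a = ∑ j : Fin (d+1), l j * a ^ (j:ℕ) := by
    intro a; simp [hp, eval_finset_sum]
  have hpne : p ≠ 0 := by
    obtain ⟨j0, hj0⟩ := Function.ne_iff.mp hl
    have hc : p.coeff (j0:ℕ) = l j0 := by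
      rw [hp, Polynomial.finset_sum_coeff]
      rw [Finset.sum_eq_single j0]
      · simp
      · intro b _ hb
        have : ((j0:ℕ) : ℕ) ≠ (b:ℕ) := fun h => hb (Fin.ext h.symm)
        simp [Polynomial.coeff_C_mul, Polynomial.coeff_X_pow, this]
      · simp
    intro h
    rw [h] at hc
    simp at hc
    exact hj0 hc.symm
  have hdeg : p.natDegree ≤ d := by
    refine natDegree_sum_le_of_forall_le _ _ fun j _ => ?_
    refine le_trans (natDegree_C_mul_le _ _) ?_
    simpa [Polynomial.natDegree_X_pow] using Nat.lt_succ_iff.mp j.isLt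
  refine le_trans (Polynomial.card_le_degree_of_subset_roots ?_) hdeg
  intro a ha
  rw [Finset.mem_val, Finset.mem_filter] at ha
  rw [Polynomial.mem_roots hpne, Polynomial.IsRoot, heval]
  exact ha.2

private lemma card_X (k : ℕ) :
    (univ.filter fun x : Fin k → F => Function.Injective x).card
      = ∏ i ∈ Finset.range k, (Fintype.card F - i) := by
  rw [← Fintype.card_subtype]
  rw [Fintype.card_congr (Equiv.subtypeInjectiveEquivEmbedding (Fin k) F)]
  rw [Fintype.card_embedding_eq, Fintype.card_fin, Nat.descFactorial_eq_prod_range]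

private lemma card_Y (k : ℕ) :
    (univ.filter fun y : Fin k → F => ∀ i, y i ≠ 0).card = (Fintype.card F - 1) ^ k := by
  have h : (univ.filter fun y : Fin k → F => ∀ i, y i ≠ 0)
      = Fintype.piFinset fun _ : Fin k => univ.erase (0:F) := by
    ext y; simp [Fintype.mem_piFinset]
  rw [h, Fintype.card_piFinset]
  simp [Finset.card_erase_of_mem, Finset.card_univ]

private def goodF (F : Type*) [Field F] [Fintype F] [DecidableEq F] (k : ℕ) :
    Finset ((Fin k → F) × (Fin k → F)) :=
  (univ.filter fun x : Fin k → F => Function.Injective x) ×ˢ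
    (univ.filter fun y : Fin k → F => ∀ i, y i ≠ 0)

private lemma card_goodF (k : ℕ) :
    (goodF F k).card = (∏ i ∈ Finset.range k, (Fintype.card F - i)) *
      (Fintype.card F - 1) ^ k := by
  rw [goodF, Finset.card_product, card_X, card_Y]

private noncomputable def Sf (k d : ℕ) (ψ : AddChar F ℂ) (l : Fin (d+1) → F) : ℂ :=
  ∑ p ∈ goodF F k, ψ (∑ j, l j * ∑ i, p.2 i * p.1 i ^ (j:ℕ))

private lemma orth (d : ℕ) {ψ : AddChar F ℂ} (hψ : ψ.IsPrimitive) (w : Fin (d+1) → F) :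
    ∑ l : Fin (d+1) → F, ψ (∑ j, l j * w j)
      = if w = 0 then ((Fintype.card F : ℂ)) ^ (d+1) else 0 := by
  calc ∑ l : Fin (d+1) → F, ψ (∑ j, l j * w j)
      = ∑ l : Fin (d+1) → F, ∏ j, ψ (l j * w j) := by
        exact Finset.sum_congr rfl fun l _ => addChar_map_sum ψ _ _
    _ = ∏ j : Fin (d+1), ∑ c : F, ψ (c * w j) := by
        rw [← Fintype.piFinset_univ,
          Finset.sum_prod_piFinset (univ : Finset F) (fun j c => ψ (c * w j))]
    _ = ∏ j : Fin (d+1), (if w j = 0 then (Fintype.card F : ℂ) else 0) := by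
        refine Finset.prod_congr rfl fun j _ => ?_
        exact (AddChar.sum_mulShift (w j) hψ).trans (by split_ifs <;> simp)
    _ = if w = 0 then ((Fintype.card F : ℂ)) ^ (d+1) else 0 := by
        by_cases hw : w = 0
        · simp [hw, Finset.prod_const]
        · rw [if_neg hw]
          obtain ⟨j, hj⟩ := Function.ne_iff.mp hw
          refine Finset.prod_eq_zero (Finset.mem_univ j) ?_
          rw [if_neg (by simpa using hj)]

private lemma Sbound (k d : ℕ) {ψ : AddChar F ℂ} (hψ : ψ.IsPrimitive)
    {l : Fin (d+1) → F} (hl : l ≠ 0) :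
    ‖Sf k d ψ l‖ ≤ ((Fintype.card F : ℝ) * ((d:ℝ)+1)) ^ k := by
  set q : ℕ := Fintype.card F with hq
  set P : F → F := fun a => ∑ j : Fin (d+1), l j * a ^ (j:ℕ) with hP
  set g : F → ℂ := fun b => ∑ c ∈ univ.erase (0:F), ψ (c * b) with hg
  have hexp : ∀ p : (Fin k → F) × (Fin k → F),
      (∑ j, l j * ∑ i, p.2 i * p.1 i ^ (j:ℕ)) = ∑ i, p.2 i * P (p.1 i) := by
    intro p
    calc ∑ j, l j * ∑ i, p.2 i * p.1 i ^ (j:ℕ)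
        = ∑ j : Fin (d+1), ∑ i : Fin k, p.2 i * (l j * p.1 i ^ (j:ℕ)) := by
          refine Finset.sum_congr rfl fun j _ => ?_
          rw [Finset.mul_sum]; exact Finset.sum_congr rfl fun i _ => by ring
      _ = ∑ i, ∑ j, p.2 i * (l j * p.1 i ^ (j:ℕ)) := Finset.sum_comm
      _ = ∑ i, p.2 i * P (p.1 i) := by
          refine Finset.sum_congr rfl fun i _ => ?_
          simp only [hP]
          rw [Finset.mul_sum]
  have hSf : Sf k d ψ l = ∑ x ∈ (univ.filter fun x : Fin k → F => Function.Injective x),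
      ∏ i, g (P (x i)) := by
    rw [Sf, goodF, Finset.sum_product]
    refine Finset.sum_congr rfl fun x _ => ?_
    have hY : (univ.filter fun y : Fin k → F => ∀ i, y i ≠ 0)
        = Fintype.piFinset fun _ : Fin k => univ.erase (0:F) := by
      ext y; simp [Fintype.mem_piFinset]
    rw [hY]
    calc ∑ y ∈ Fintype.piFinset fun _ : Fin k => univ.erase (0:F),
          ψ (∑ j, l j * ∑ i, y i * x i ^ (j:ℕ))
        = ∑ y ∈ Fintype.piFinset fun _ : Fin k => univ.erase (0:F),
          ∏ i, ψ (y i * P (x i)) := by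
          refine Finset.sum_congr rfl fun y _ => ?_
          rw [hexp (x, y)]
          exact addChar_map_sum ψ _ _
      _ = ∏ i, ∑ c ∈ univ.erase (0:F), ψ (c * P (x i)) :=
          Finset.sum_prod_piFinset (univ.erase (0:F)) (fun i c => ψ (c * P (x i)))
      _ = ∏ i, g (P (x i)) := rfl
  have hgnorm : ∀ b : F, ‖g b‖ ≤ (if b = 0 then (q:ℝ) else 0) + 1 := by
    intro b
    by_cases hb : b = 0
    · rw [if_pos hb]
      calc ‖g b‖ ≤ ∑ c ∈ univ.erase (0:F), ‖ψ (c * b)‖ := norm_sum_le _ _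
        _ = ((univ.erase (0:F)).card : ℝ) := by simp [norm_psi]
        _ ≤ (q:ℝ) + 1 := by
            have := Finset.card_erase_le (s := (univ : Finset F)) (a := (0:F))
            have h2 : ((univ.erase (0:F)).card : ℝ) ≤ (q:ℝ) := by
              exact_mod_cast le_trans this (le_of_eq Finset.card_univ)
            linarith
    · rw [if_neg hb]
      have h0 : ∑ c : F, ψ (c * b) = 0 :=
        (AddChar.sum_mulShift b hψ).trans (by rw [if_neg hb]; simp)
      have h2 : ψ ((0:F) * b) + ∑ c ∈ univ.erase (0:F), ψ (c * b) = ∑ c : F, ψ (c * b) :=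
        Finset.add_sum_erase univ (fun c : F => ψ (c * b)) (Finset.mem_univ 0)
      have : g b = -1 := by
        rw [h0] at h2
        rw [hg]
        simp only [zero_mul, AddChar.map_zero_eq_one] at h2
        linear_combination h2
      rw [this]
      simp
  have h1 : ‖Sf k d ψ l‖ ≤ ∑ x ∈ (univ.filter fun x : Fin k → F => Function.Injective x),
      ∏ i, ‖g (P (x i))‖ := by
    rw [hSf]
    refine le_trans (norm_sum_le _ _) (Finset.sum_le_sum fun x _ => ?_)
    exact le_of_eq (norm_prod _ _)
  have h2 : ∑ x ∈ (univ.filter fun x : Fin k → F => Function.Injective x),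
      ∏ i, ‖g (P (x i))‖ ≤ ∑ x : Fin k → F, ∏ i, ‖g (P (x i))‖ := by
    refine Finset.sum_le_sum_of_subset_of_nonneg (Finset.filter_subset _ _) fun x _ _ => ?_
    exact Finset.prod_nonneg fun i _ => norm_nonneg _
  have h3 : ∑ x : Fin k → F, ∏ i, ‖g (P (x i))‖ = (∑ a : F, ‖g (P a)‖) ^ k := by
    rw [← Fintype.piFinset_univ,
      Finset.sum_prod_piFinset (univ : Finset F) (fun (_ : Fin k) (a : F) => ‖g (P a)‖)]
    rw [Finset.prod_const, Finset.card_univ, Fintype.card_fin]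
  have h4 : ∑ a : F, ‖g (P a)‖ ≤ (q:ℝ) * ((d:ℝ)+1) := by
    have hr : ((univ.filter fun a : F => P a = 0).card : ℝ) ≤ (d:ℝ) := by
      exact_mod_cast roots_card hl
    calc ∑ a : F, ‖g (P a)‖ ≤ ∑ a : F, ((if P a = 0 then (q:ℝ) else 0) + 1) :=
          Finset.sum_le_sum fun a _ => hgnorm (P a)
      _ = ((univ.filter fun a : F => P a = 0).card : ℝ) * q + q := by
          rw [Finset.sum_add_distrib, ← Finset.sum_filter, Finset.sum_const, Finset.sum_const]
          simp [Finset.card_univ, hq, nsmul_eq_mul]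
      _ ≤ (d:ℝ) * q + q := by
          have hq0 : (0:ℝ) ≤ (q:ℝ) := Nat.cast_nonneg _
          nlinarith
      _ = (q:ℝ) * ((d:ℝ)+1) := by ring
  calc ‖Sf k d ψ l‖ ≤ (∑ a : F, ‖g (P a)‖) ^ k := by
        rw [← h3]; exact le_trans h1 h2
    _ ≤ ((q:ℝ) * ((d:ℝ)+1)) ^ k := by
        refine pow_le_pow_left₀ ?_ h4 k
        exact Finset.sum_nonneg fun a _ => norm_nonneg _

private lemma parseval (k d : ℕ) {ψ : AddChar F ℂ} (hψ : ψ.IsPrimitive) :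
    ∑ l : Fin (d+1) → F, ‖Sf k d ψ l‖^2
      = (Fintype.card F : ℝ)^(d+1) *
        ((((goodF F k) ×ˢ (goodF F k)).filter fun t =>
            (fun j : Fin (d+1) => ∑ i, t.1.2 i * t.1.1 i ^ (j:ℕ))
              = fun j : Fin (d+1) => ∑ i, t.2.2 i * t.2.1 i ^ (j:ℕ)).card : ℝ) := by
  have hR : 0 < ringChar F := Nat.pos_of_ne_zero (CharP.ringChar_ne_zero_of_finite F)
  have key1 : ∀ z : ℂ, ((‖z‖:ℂ))^2 = z * (starRingEnd ℂ) z := by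
    intro z
    rw [Complex.mul_conj, Complex.normSq_eq_norm_sq]
    push_cast
    ring
  have hC : ∑ l : Fin (d+1) → F, ((‖Sf k d ψ l‖:ℂ))^2
      = (Fintype.card F : ℂ)^(d+1) *
        ((((goodF F k) ×ˢ (goodF F k)).filter fun t =>
            (fun j : Fin (d+1) => ∑ i, t.1.2 i * t.1.1 i ^ (j:ℕ))
              = fun j : Fin (d+1) => ∑ i, t.2.2 i * t.2.1 i ^ (j:ℕ)).card : ℂ) := by
    have hconj : ∀ l : Fin (d+1) → F, (starRingEnd ℂ) (Sf k d ψ l)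
        = ∑ p ∈ goodF F k, ψ (-(∑ j, l j * ∑ i, p.2 i * p.1 i ^ (j:ℕ))) := by
      intro l
      rw [Sf, map_sum]
      refine Finset.sum_congr rfl fun p _ => ?_
      rw [AddChar.starComp_apply hR, AddChar.inv_apply]
    calc ∑ l : Fin (d+1) → F, ((‖Sf k d ψ l‖:ℂ))^2
        = ∑ l : Fin (d+1) → F, ∑ p ∈ goodF F k, ∑ p' ∈ goodF F k,
            ψ (∑ j, l j * ((∑ i, p.2 i * p.1 i ^ (j:ℕ)) - ∑ i, p'.2 i * p'.1 i ^ (j:ℕ))) := by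
          refine Finset.sum_congr rfl fun l _ => ?_
          rw [key1, hconj, Sf, Finset.sum_mul_sum]
          refine Finset.sum_congr rfl fun p _ => Finset.sum_congr rfl fun p' _ => ?_
          rw [← AddChar.map_add_eq_mul, ← sub_eq_add_neg, ← Finset.sum_sub_distrib]
          congr 1
          exact Finset.sum_congr rfl fun j _ => (mul_sub _ _ _).symm
      _ = ∑ p ∈ goodF F k, ∑ p' ∈ goodF F k, ∑ l : Fin (d+1) → F,
            ψ (∑ j, l j * ((∑ i, p.2 i * p.1 i ^ (j:ℕ)) - ∑ i, p'.2 i * p'.1 i ^ (j:ℕ))) := by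
          rw [Finset.sum_comm]
          exact Finset.sum_congr rfl fun p _ => Finset.sum_comm
      _ = ∑ p ∈ goodF F k, ∑ p' ∈ goodF F k,
            (if (fun j : Fin (d+1) => ∑ i, p.2 i * p.1 i ^ (j:ℕ))
                = (fun j : Fin (d+1) => ∑ i, p'.2 i * p'.1 i ^ (j:ℕ))
              then ((Fintype.card F : ℂ)) ^ (d+1) else 0) := by
          refine Finset.sum_congr rfl fun p _ => Finset.sum_congr rfl fun p' _ => ?_
          rw [orth d hψ]
          congr 1
          simp only [funext_iff, Pi.zero_apply, sub_eq_zero]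
      _ = (Fintype.card F : ℂ)^(d+1) *
          ((((goodF F k) ×ˢ (goodF F k)).filter fun t =>
            (fun j : Fin (d+1) => ∑ i, t.1.2 i * t.1.1 i ^ (j:ℕ))
              = fun j : Fin (d+1) => ∑ i, t.2.2 i * t.2.1 i ^ (j:ℕ)).card : ℂ) := by
          rw [← Finset.sum_product']
          rw [← Finset.sum_filter]
          rw [Finset.sum_const, nsmul_eq_mul, mul_comm]
  have := hC
  rw [show ∑ l : Fin (d+1) → F, ((‖Sf k d ψ l‖:ℂ))^2
      = ((∑ l : Fin (d+1) → F, ‖Sf k d ψ l‖^2 : ℝ) : ℂ) by push_cast; rfl] at this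
  rw [show ((Fintype.card F : ℂ))^(d+1) *
        ((((goodF F k) ×ˢ (goodF F k)).filter fun t =>
            (fun j : Fin (d+1) => ∑ i, t.1.2 i * t.1.1 i ^ (j:ℕ))
              = fun j : Fin (d+1) => ∑ i, t.2.2 i * t.2.1 i ^ (j:ℕ)).card : ℂ)
      = (((Fintype.card F : ℝ)^(d+1) *
        ((((goodF F k) ×ˢ (goodF F k)).filter fun t =>
            (fun j : Fin (d+1) => ∑ i, t.1.2 i * t.1.1 i ^ (j:ℕ))
              = fun j : Fin (d+1) => ∑ i, t.2.2 i * t.2.1 i ^ (j:ℕ)).card : ℝ) : ℝ) : ℂ) by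
    push_cast; ring] at this
  exact_mod_cast this

private theorem main (F : Type*) [Field F] [Fintype F] [DecidableEq F] (k d : ℕ) :
    (Nat.card {t : ((Fin k → F) × (Fin k → F)) × ((Fin k → F) × (Fin k → F)) //
        Function.Injective t.1.1 ∧ (∀ i, t.1.2 i ≠ 0) ∧
        Function.Injective t.2.1 ∧ (∀ i, t.2.2 i ≠ 0) ∧
        (fun j : Fin (d + 1) => ∑ i, t.1.2 i * t.1.1 i ^ (j : ℕ)) =
          (fun j : Fin (d + 1) => ∑ i, t.2.2 i * t.2.1 i ^ (j : ℕ))} : ℝ) ≤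
      (((∏ i ∈ Finset.range k, (Fintype.card F - i)) * (Fintype.card F - 1) ^ k : ℕ) : ℝ) ^ 2 /
          (Fintype.card F : ℝ) ^ (d + 1) +
        ((Fintype.card F : ℝ) * ((d : ℝ) + 1)) ^ (2 * k) := by
  classical
  set q : ℕ := Fintype.card F with hq
  set Q : ℕ := (((goodF F k) ×ˢ (goodF F k)).filter fun t =>
      (fun j : Fin (d+1) => ∑ i, t.1.2 i * t.1.1 i ^ (j:ℕ))
        = fun j : Fin (d+1) => ∑ i, t.2.2 i * t.2.1 i ^ (j:ℕ)).card with hQ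
  set Ng : ℕ := (∏ i ∈ Finset.range k, (q - i)) * (q - 1) ^ k with hNg
  -- identify Nat.card with Q
  have hcard : Nat.card {t : ((Fin k → F) × (Fin k → F)) × ((Fin k → F) × (Fin k → F)) //
        Function.Injective t.1.1 ∧ (∀ i, t.1.2 i ≠ 0) ∧
        Function.Injective t.2.1 ∧ (∀ i, t.2.2 i ≠ 0) ∧
        (fun j : Fin (d + 1) => ∑ i, t.1.2 i * t.1.1 i ^ (j : ℕ)) =
          (fun j : Fin (d + 1) => ∑ i, t.2.2 i * t.2.1 i ^ (j : ℕ))} = Q := by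
    rw [Nat.card_eq_fintype_card, Fintype.card_subtype, hQ]
    congr 1
    ext t
    simp only [Finset.mem_filter, Finset.mem_univ, true_and, Finset.mem_product, goodF]
    tauto
  -- the primitive character
  set ψ : AddChar F ℂ := AddChar.FiniteField.primitiveChar_to_Complex F with hψdef
  have hψ : ψ.IsPrimitive := AddChar.FiniteField.primitiveChar_to_Complex_isPrimitive F
  -- value at 0
  have hS0 : Sf k d ψ 0 = ((goodF F k).card : ℂ) := by
    rw [Sf]
    simp
  have hS0norm : ‖Sf k d ψ 0‖^2 = (Ng:ℝ)^2 := by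
    rw [hS0, hNg, ← card_goodF k]
    simp
  -- main inequality on q^(d+1) * Q
  have hkey : (q:ℝ)^(d+1) * Q ≤ (Ng:ℝ)^2 + (q:ℝ)^(d+1) * ((q:ℝ) * ((d:ℝ)+1))^(2*k) := by
    have hpar := parseval (F := F) k d hψ
    rw [← hQ, ← hq] at hpar
    rw [← hpar]
    rw [← Finset.add_sum_erase univ (fun l => ‖Sf k d ψ l‖^2) (Finset.mem_univ 0)]
    rw [hS0norm]
    refine add_le_add le_rfl ?_
    calc ∑ l ∈ univ.erase (0 : Fin (d+1) → F), ‖Sf k d ψ l‖^2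
        ≤ ∑ _l ∈ univ.erase (0 : Fin (d+1) → F), (((q:ℝ) * ((d:ℝ)+1))^k)^2 := by
          refine Finset.sum_le_sum fun l hl => ?_
          have hl0 : l ≠ 0 := (Finset.mem_erase.mp hl).1
          exact pow_le_pow_left₀ (norm_nonneg _) (Sbound k d hψ hl0) 2
      _ = ((univ.erase (0 : Fin (d+1) → F)).card : ℝ) * (((q:ℝ) * ((d:ℝ)+1))^k)^2 := by
          rw [Finset.sum_const, nsmul_eq_mul]
      _ ≤ (q:ℝ)^(d+1) * ((q:ℝ) * ((d:ℝ)+1))^(2*k) := by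
          have hc : ((univ.erase (0 : Fin (d+1) → F)).card : ℝ) ≤ (q:ℝ)^(d+1) := by
            have h1 : (univ.erase (0 : Fin (d+1) → F)).card ≤ (univ : Finset (Fin (d+1) → F)).card :=
              Finset.card_erase_le
            have h2 : (univ : Finset (Fin (d+1) → F)).card = q^(d+1) := by
              rw [Finset.card_univ, Fintype.card_fun, Fintype.card_fin, hq]
            exact_mod_cast h2 ▸ h1
          have hB : (((q:ℝ) * ((d:ℝ)+1))^k)^2 = ((q:ℝ) * ((d:ℝ)+1))^(2*k) := by
            rw [← pow_mul, Nat.mul_comm]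
          rw [hB]
          refine mul_le_mul_of_nonneg_right hc ?_
          positivity
  -- conclude
  have hqpos : (0:ℝ) < (q:ℝ)^(d+1) := by
    have : 0 < q := Fintype.card_pos
    positivity
  rw [hcard]
  calc (Q:ℝ) = ((q:ℝ)^(d+1) * Q) / (q:ℝ)^(d+1) := by field_simp
    _ ≤ ((Ng:ℝ)^2 + (q:ℝ)^(d+1) * ((q:ℝ) * ((d:ℝ)+1))^(2*k)) / (q:ℝ)^(d+1) :=
        (div_le_div_iff_of_pos_right hqpos).mpr hkey
    _ = (Ng:ℝ)^2 / (q:ℝ)^(d+1) + ((q:ℝ) * ((d:ℝ)+1))^(2*k) := by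
        rw [add_div, mul_div_cancel_left₀ _ (ne_of_gt hqpos)]

end Stmt16Aux

/-- Let `q` be a prime power (`F` the finite field with `q` elements)
and `k ≥ 1, d` natural numbers.  Then the number of quadruples `(u,v,x,y)` with
`u, x` having pairwise distinct entries, `v, y` having all entries nonzero, and
`Z(u,v) = Z(x,y)`, is at most `N_g²/q^{d+1} + (q(d+1))^{2k}` as real numbers,
where `N_g := (∏_{i=0}^{k-1}(q-i)) · (q-1)^k`. -/
theorem stmt_16 (F : Type*) [Field F] [Fintype F] (k d : ℕ) (hk : 1 ≤ k) :
    (Nat.card {t : ((Fin k → F) × (Fin k → F)) × ((Fin k → F) × (Fin k → F)) //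
        Function.Injective t.1.1 ∧ (∀ i, t.1.2 i ≠ 0) ∧
        Function.Injective t.2.1 ∧ (∀ i, t.2.2 i ≠ 0) ∧
        (fun j : Fin (d + 1) => ∑ i, t.1.2 i * t.1.1 i ^ (j : ℕ)) =
          (fun j : Fin (d + 1) => ∑ i, t.2.2 i * t.2.1 i ^ (j : ℕ))} : ℝ) ≤
      (((∏ i ∈ Finset.range k, (Fintype.card F - i)) * (Fintype.card F - 1) ^ k : ℕ) : ℝ) ^ 2 /
          (Fintype.card F : ℝ) ^ (d + 1) +
        ((Fintype.card F : ℝ) * ((d : ℝ) + 1)) ^ (2 * k) := by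
  letI := Classical.decEq F
  exact Stmt16Aux.main F k d
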